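/- With p_xy and p_xx defined by the recursions p_xy(3,ℓ) = p_xx(3,ℓ) = 1/3 for ℓ = 0,1,2; p_xx(k,0) = p_xy(k,0) with p_xy(k,0) = 1/C(k+1,2) + (C(k-1,2)/C(k+1,2))*p_xy(k-1,0) for k ≥ 4; p_xx(k,ℓ) = 1/C(k,2) + (C(k-2,2)/C(k,2))*p_xx(k-1,ℓ-1) and p_xy(k,ℓ) = (C(k-1,2)/C(k,2))*p_xy(k-1,ℓ-1) for k ≥ 4, k > ℓ ≥ 1: one has p_xx(k,ℓ) - p_xy(k,ℓ) = 0 for (k = 3, ℓ = 0,1,2) and (k ≥ 4, ℓ = 0), and p_xx(k,ℓ) - p_xy(k,ℓ) > 0 for all k ≥ 4 and 1 ≤ ℓ < k. -/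

import Mathlib

/-- `C2 n = C(n,2) = n(n-1)/2` as a rational number. -/
def C2 (n : ℕ) : ℚ := (n : ℚ) * ((n : ℚ) - 1) / 2

theorem stmt9 (p_xy p_xx : ℕ → ℕ → ℚ)
    (h3 : ∀ ℓ, ℓ ≤ 2 → p_xy 3 ℓ = 1/3 ∧ p_xx 3 ℓ = 1/3)
    (h0 : ∀ k, 4 ≤ k →
      p_xy k 0 = 1 / C2 (k+1) + (C2 (k-1) / C2 (k+1)) * p_xy (k-1) 0 ∧
      p_xx k 0 = p_xy k 0)
    (hxx : ∀ k ℓ, 4 ≤ k → 1 ≤ ℓ → ℓ < k →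
      p_xx k ℓ = 1 / C2 k + (C2 (k-2) / C2 k) * p_xx (k-1) (ℓ-1))
    (hxy : ∀ k ℓ, 4 ≤ k → 1 ≤ ℓ → ℓ < k →
      p_xy k ℓ = (C2 (k-1) / C2 k) * p_xy (k-1) (ℓ-1)) :
    (∀ ℓ, ℓ ≤ 2 → p_xx 3 ℓ - p_xy 3 ℓ = 0) ∧
    (∀ k, 4 ≤ k → p_xx k 0 - p_xy k 0 = 0) ∧
    (∀ k ℓ, 4 ≤ k → 1 ≤ ℓ → ℓ < k → 0 < p_xx k ℓ - p_xy k ℓ) := by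
  -- Lemma A: p_xy k ℓ < 1/(k-1) for all 3 ≤ k, ℓ < k
  have hA : ∀ k, 3 ≤ k → ∀ ℓ, ℓ < k → p_xy k ℓ < 1 / ((k : ℚ) - 1) := by
    intro k hk
    induction k, hk using Nat.le_induction with
    | base =>
      intro ℓ hℓ
      rw [(h3 ℓ (by omega)).1]
      norm_num
    | succ n hn ih =>
      intro ℓ hℓ
      have hx : (3 : ℚ) ≤ (n : ℚ) := by exact_mod_cast hn
      have hx0 : ((n:ℚ)) ≠ 0 := by linarith
      have hx1 : ((n:ℚ)) - 1 ≠ 0 := by intro h; linarith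
      have hx2 : ((n:ℚ)) + 1 ≠ 0 := by intro h; linarith
      have hx3 : ((n:ℚ)) + 2 ≠ 0 := by intro h; linarith
      have hx4 : ((n:ℚ)) + 1 - 1 ≠ 0 := by intro h; linarith
      have hx5 : ((n:ℚ)) + 1 + 1 ≠ 0 := by intro h; linarith
      have hx6 : ((n:ℚ)) + 1 + 1 - 1 ≠ 0 := by intro h; linarith
      have hlast : 1 / ((n:ℚ) + 1) < 1 / ((n:ℚ) + 1 - 1) := by
        rw [div_lt_div_iff₀ (by linarith) (by linarith)]; linarith
      rcases Nat.eq_zero_or_pos ℓ with rfl | hℓ1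
      · -- ℓ = 0 case
        have he := (h0 (n+1) (by omega)).1
        simp only [Nat.add_sub_cancel] at he
        rw [he]
        have hq := ih 0 (by omega)
        have hBp : (0 : ℚ) < C2 n / C2 (n+1+1) := by
          unfold C2; push_cast
          apply div_pos <;> nlinarith
        have keyeq : 1 / C2 (n+1+1) + (C2 n / C2 (n+1+1)) * (1 / ((n:ℚ) - 1)) =
            1 / ((n:ℚ) + 1) := by
          unfold C2; push_cast
          field_simp
          ring
        push_cast
        calc 1 / C2 (n+1+1) + C2 n / C2 (n+1+1) * p_xy n 0
            < 1 / C2 (n+1+1) + C2 n / C2 (n+1+1) * (1 / ((n:ℚ) - 1)) := by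
              exact add_lt_add_right (mul_lt_mul_of_pos_left hq hBp) _
          _ = 1 / ((n:ℚ) + 1) := keyeq
          _ < 1 / ((n:ℚ) + 1 - 1) := hlast
      · have he := hxy (n+1) ℓ (by omega) hℓ1 hℓ
        simp only [Nat.add_sub_cancel] at he
        rw [he]
        have hq := ih (ℓ-1) (by omega)
        have hBp : (0 : ℚ) < C2 n / C2 (n+1) := by
          unfold C2; push_cast
          apply div_pos <;> nlinarith
        have keyeq : (C2 n / C2 (n+1)) * (1 / ((n:ℚ) - 1)) = 1 / ((n:ℚ) + 1) := by
          unfold C2; push_cast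
          field_simp
          ring
        push_cast
        calc C2 n / C2 (n+1) * p_xy n (ℓ-1)
            < C2 n / C2 (n+1) * (1 / ((n:ℚ) - 1)) := mul_lt_mul_of_pos_left hq hBp
          _ = 1 / ((n:ℚ) + 1) := keyeq
          _ < 1 / ((n:ℚ) + 1 - 1) := hlast
  -- Main combined statement
  have hM : ∀ k, 3 ≤ k → ∀ ℓ, ℓ < k →
      0 ≤ p_xx k ℓ - p_xy k ℓ ∧ (1 ≤ ℓ → 4 ≤ k → 0 < p_xx k ℓ - p_xy k ℓ) := by
    intro k hk
    induction k, hk using Nat.le_induction with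
    | base =>
      intro ℓ hℓ
      obtain ⟨h1, h2⟩ := h3 ℓ (by omega)
      exact ⟨by rw [h1, h2]; norm_num, fun _ h4 => absurd h4 (by omega)⟩
    | succ n hn ih =>
      intro ℓ hℓ
      have hx : (3 : ℚ) ≤ (n : ℚ) := by exact_mod_cast hn
      rcases Nat.eq_zero_or_pos ℓ with rfl | hℓ1
      · obtain ⟨-, h2⟩ := h0 (n+1) (by omega)
        exact ⟨by rw [h2]; simp, fun h _ => absurd h (by omega)⟩
      · have he1 := hxx (n+1) ℓ (by omega) hℓ1 hℓ
        have he2 := hxy (n+1) ℓ (by omega) hℓ1 hℓ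
        have e2 : n + 1 - 2 = n - 1 := by omega
        simp only [Nat.add_sub_cancel, e2] at he1 he2
        have hy : ((n-1 : ℕ) : ℚ) = (n:ℚ) - 1 := by
          rw [Nat.cast_sub (by omega : 1 ≤ n)]; norm_num
        set a := p_xx n (ℓ-1) with ha
        set b := p_xy n (ℓ-1) with hb
        have hab : 0 ≤ a - b := (ih (ℓ-1) (by omega)).1
        have hbb : b < 1 / ((n:ℚ) - 1) := hA n hn (ℓ-1) (by omega)
        have hb1 : ((n:ℚ) - 1) * b < 1 := by
          have h1 : (0:ℚ) < (n:ℚ) - 1 := by linarith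
          calc ((n:ℚ) - 1) * b < ((n:ℚ) - 1) * (1 / ((n:ℚ) - 1)) :=
                mul_lt_mul_of_pos_left hbb h1
            _ = 1 := by field_simp
        have hn0 : (n:ℚ) ≠ 0 := by intro h; linarith
        have hn1 : (n:ℚ) + 1 ≠ 0 := by intro h; linarith
        have hn2 : (n:ℚ) + 1 - 1 ≠ 0 := by intro h; linarith
        have hn3 : (n:ℚ) - 1 ≠ 0 := by intro h; linarith
        have hid : p_xx (n+1) ℓ - p_xy (n+1) ℓ =
            (C2 (n-1) / C2 (n+1)) * (a - b) + (1 / C2 (n+1)) * (1 - ((n:ℚ) - 1) * b) := by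
          rw [he1, he2]
          unfold C2
          rw [hy]
          push_cast
          field_simp
          ring
        have hc1 : 0 ≤ C2 (n-1) / C2 (n+1) := by
          unfold C2
          rw [hy]
          push_cast
          apply div_nonneg <;> nlinarith
        have hc2 : 0 < 1 / C2 (n+1) := by
          unfold C2; push_cast
          apply div_pos <;> nlinarith
        have hpos : 0 < p_xx (n+1) ℓ - p_xy (n+1) ℓ := by
          rw [hid]
          have t2 := mul_pos hc2 (by linarith : (0:ℚ) < 1 - ((n:ℚ) - 1) * b)
          have t1 := mul_nonneg hc1 hab
          linarith
        exact ⟨le_of_lt hpos, fun _ _ => hpos⟩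
  refine ⟨fun ℓ hℓ => ?_, fun k hk => ?_, fun k ℓ hk h1 h2 => ?_⟩
  · obtain ⟨h1, h2⟩ := h3 ℓ hℓ; rw [h1, h2]; norm_num
  · rw [(h0 k hk).2]; ring
  · exact (hM k (by omega) ℓ h2).2 h1 hk
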